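/- Let R be a commutative ring, A a free R-module, and (B_j)_{j ∈ J} an arbitrary family of R-modules. Then the canonical R-linear map A ⊗_R (∏_{j ∈ J} B_j) → ∏_{j ∈ J} (A ⊗_R B_j), sending a ⊗ (b_j)_j to (a ⊗ b_j)_j, is injective. -/

import Mathlib

open scoped TensorProduct

/-- For a commutative ring `R`, a free `R`-module `A` and an arbitrary family `(B_j)_{j ∈ J}` of
`R`-modules, the canonical `R`-linear map `A ⊗_R (∏ j, B j) → ∏ j, (A ⊗_R B j)`, sending
`a ⊗ (b_j)_j` to `(a ⊗ b_j)_j`, is injective. -/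
theorem piRightHom_injective_of_free (R : Type) [CommRing R]
    (A : Type) [AddCommGroup A] [Module R A] [Module.Free R A]
    (J : Type) (B : J → Type) [∀ j, AddCommGroup (B j)] [∀ j, Module R (B j)] :
    Function.Injective (TensorProduct.piRightHom R R A B) := by
  classical
  set ι := Module.Free.ChooseBasisIndex R A
  set b : Module.Basis ι R A := Module.Free.chooseBasis R A
  let e : A ⊗[R] (∀ j, B j) ≃ₗ[R] ι →₀ (∀ j, B j) :=
    (TensorProduct.congr b.repr (LinearEquiv.refl R _)).trans
      (TensorProduct.finsuppScalarLeft R _ ι)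
  let ej : ∀ j, A ⊗[R] B j ≃ₗ[R] ι →₀ B j := fun j =>
    (TensorProduct.congr b.repr (LinearEquiv.refl R _)).trans
      (TensorProduct.finsuppScalarLeft R _ ι)
  have key : ∀ (x : A ⊗[R] (∀ j, B j)) (i : ι) (j : J),
      e x i j = ej j (TensorProduct.piRightHom R R A B x j) i := by
    intro x
    induction x using TensorProduct.induction_on with
    | zero => simp
    | tmul a m =>
      intro i j
      simp [e, ej, TensorProduct.finsuppScalarLeft_apply_tmul_apply,
        TensorProduct.piRightHom_tmul]
    | add x y hx hy =>
      intro i j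
      simp only [map_add, Finsupp.add_apply, Pi.add_apply, hx, hy]
  intro x y h
  apply e.injective
  ext i j
  rw [key, key, h]
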